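/- Let M be a pointed metric space and let Λ be a bounded linear functional on ℓ∞(M̃). Then there exists a positive bounded linear functional Λ' on ℓ∞(M̃) satisfying Λ'∘Φ = Λ∘Φ and ‖Λ'‖ = ‖Λ‖. Consequently, every bounded linear functional F on Lip_0(M) has the form F = Λ'∘Φ for some positive Λ' with ‖Λ'‖ = ‖F‖. -/

import Mathlib

open scoped ENNReal

/-- The set `M̃ = {(x,y) : x ≠ y}` as a subtype. -/
def Mt (M : Type*) : Type _ := {p : M × M // p.1 ≠ p.2}

variable {M : Type*} [MetricSpace M]

/-- `ℓ∞(M̃)`. -/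
noncomputable abbrev ellInfty (M : Type*) : Type _ := ↥(lp (fun _ : Mt M => ℝ) ∞)

/-- A bounded linear functional on `ℓ∞(M̃)` is positive if it is nonnegative on
nonnegative functions. -/
def IsPositive {M : Type*} (Λ : ellInfty M →L[ℝ] ℝ) : Prop :=
  ∀ h : ellInfty M, (∀ p : Mt M, 0 ≤ h p) → 0 ≤ Λ h

/-- The indicator function of `A ⊆ M̃` as an element of `ℓ∞(M̃)`. -/
noncomputable def indicLp {M : Type*} (A : Set (Mt M)) : ellInfty M :=
  ⟨A.indicator 1, memℓp_infty (by
    refine ⟨1, ?_⟩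
    rintro r ⟨p, rfl⟩
    by_cases hp : p ∈ A <;>
      simp [Set.indicator_apply, hp])⟩

/-- The image of `Lip₀(M)` in `ℓ∞(M̃)` under the de Leeuw embedding `Φ`;
`Lip₀(M)` itself is identified with this submodule, carrying the induced
(Lipschitz) norm, and `Φ` is then the inclusion `(LipO M base).subtypeL`. -/
noncomputable def LipO (M : Type*) [MetricSpace M] (base : M) :
    Submodule ℝ (ellInfty M) where
  carrier := {g | ∃ f : M → ℝ, f base = 0 ∧
    ∀ p : Mt M, g p = (f p.1.1 - f p.1.2) / dist p.1.1 p.1.2}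
  add_mem' := by
    rintro g₁ g₂ ⟨f₁, hf₁, h₁⟩ ⟨f₂, hf₂, h₂⟩
    refine ⟨f₁ + f₂, by simp [hf₁, hf₂], fun p => ?_⟩
    have : (⇑(g₁ + g₂) : Mt M → ℝ) = ⇑g₁ + ⇑g₂ := lp.coeFn_add g₁ g₂
    rw [this]
    simp only [Pi.add_apply, h₁ p, h₂ p]
    ring
  zero_mem' := by
    refine ⟨0, rfl, fun p => ?_⟩
    have : (⇑(0 : ellInfty M) : Mt M → ℝ) = 0 := lp.coeFn_zero _ _
    simp [this]
  smul_mem' := by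
    rintro c g ⟨f, hf, h⟩
    refine ⟨c • f, by simp [hf], fun p => ?_⟩
    have : (⇑(c • g) : Mt M → ℝ) = c • ⇑g := lp.coeFn_smul c g
    rw [this]
    simp only [Pi.smul_apply, smul_eq_mul, h p]
    ring

open Classical in
/-- Evaluation of (the function represented by) `g ∈ Lip₀(M)` at `x`. -/
noncomputable def evalAux (base x : M) (g : ↥(LipO M base)) : ℝ :=
  if h : x = base then 0
  else ((g : ellInfty M) : Mt M → ℝ) ⟨(x, base), h⟩ * dist x base

/-- The evaluation functional `δ_x : Lip₀(M) → ℝ`, `δ_x(f) = f(x)`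
(recovering `f` from its de Leeuw transform). -/
noncomputable def deltaF (base x : M) : ↥(LipO M base) →L[ℝ] ℝ :=
  LinearMap.mkContinuous
    { toFun := evalAux base x
      map_add' := fun g₁ g₂ => by
        unfold evalAux
        split_ifs with h
        · simp
        · simp only [Submodule.coe_add, lp.coeFn_add, Pi.add_apply]
          erw [Pi.add_apply]
          ring
      map_smul' := fun c g => by
        unfold evalAux
        split_ifs with h
        · simp
        · simp only [Submodule.coe_smul, lp.coeFn_smul, Pi.smul_apply,
            smul_eq_mul, RingHom.id_apply]
          erw [Pi.smul_apply, smul_eq_mul]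
          ring }
    (dist x base)
    (by
      intro g
      simp only [LinearMap.coe_mk, AddHom.coe_mk]
      unfold evalAux
      split_ifs with h
      · subst h
        rw [norm_zero, dist_self, zero_mul]
      · have h1 : ‖((g : ellInfty M) : Mt M → ℝ) ⟨(x, base), h⟩‖ ≤ ‖(g : ellInfty M)‖ :=
          lp.norm_apply_le_norm ENNReal.top_ne_zero (g : ellInfty M) ⟨(x, base), h⟩
        have h2 : ‖(g : ellInfty M)‖ = ‖g‖ := rfl
        calc ‖((g : ellInfty M) : Mt M → ℝ) ⟨(x, base), h⟩ * dist x base‖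
            = ‖((g : ellInfty M) : Mt M → ℝ) ⟨(x, base), h⟩‖ * dist x base := by
              rw [norm_mul, Real.norm_eq_abs (dist x base), abs_of_nonneg dist_nonneg]
          _ ≤ ‖g‖ * dist x base := by
              exact mul_le_mul_of_nonneg_right (h2 ▸ h1) dist_nonneg
          _ = dist x base * ‖g‖ := mul_comm _ _)

/-- The Lipschitz-free space `F(M)`: the closed linear span of the evaluation
functionals inside the dual of `Lip₀(M)`. -/
noncomputable def FreeSpan (M : Type*) [MetricSpace M] (base : M) :
    Submodule ℝ (↥(LipO M base) →L[ℝ] ℝ) :=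
  Submodule.span ℝ (Set.range (deltaF base))

/-- The Lipschitz-free space `F(M)`: the closed linear span of the evaluation
functionals inside the dual of `Lip₀(M)`. -/
noncomputable def FreeSp (M : Type*) [MetricSpace M] (base : M) :
    Set (↥(LipO M base) →L[ℝ] ℝ) :=
  closure (FreeSpan M base : Set (↥(LipO M base) →L[ℝ] ℝ))

/-- The weak-star topology `σ(Lip₀(M), F(M))` on `Lip₀(M)`. -/
noncomputable def wstar (M : Type*) [MetricSpace M] (base : M) :
    TopologicalSpace ↥(LipO M base) :=
  TopologicalSpace.induced
    (fun g => fun μ : FreeSp M base => (μ : ↥(LipO M base) →L[ℝ] ℝ) g)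
    inferInstance

variable {M : Type*} [MetricSpace M]

/-- The de Leeuw quotient `f(m_{x,y}) = (f x - f y)/d(x,y)`. -/
noncomputable def mQ (f : M → ℝ) (p : Mt M) : ℝ :=
  (f p.1.1 - f p.1.2) / dist p.1.1 p.1.2

/-- `A ⊆ M̃` is `γ`-cyclically monotonic. -/
def GammaCM (γ : ℝ) (A : Set (Mt M)) : Prop :=
  ∀ (n : ℕ) (p : Fin (n + 1) → Mt M), (∀ i, p i ∈ A) →
    0 ≤ ∑ i : Fin (n + 1),
      min (dist (p i).1.1 (p (i + 1)).1.2 - γ * dist (p i).1.1 (p i).1.2)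
          (dist (p i).1.2 (p (i + 1)).1.2)

/-- `A ⊆ M̃` is cyclically monotonic. -/
def CyclMono (A : Set (Mt M)) : Prop :=
  ∀ (n : ℕ) (p : Fin (n + 1) → Mt M), (∀ i, p i ∈ A) →
    ∑ i : Fin (n + 1), dist (p i).1.1 (p i).1.2 ≤
      ∑ i : Fin (n + 1), dist (p i).1.1 (p (i + 1)).1.2

/-- `π(A)`. -/
def piA (A : Set (Mt M)) : Set M := {z | ∃ p ∈ A, p.1.1 = z ∨ p.1.2 = z}

/-- The pair `(u,v)` as an element of `M̃`. -/
def pr {M : Type*} (u v : M) (h : u ≠ v) : Mt M := ⟨(u, v), h⟩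


set_option maxHeartbeats 2000000
section AuxForStmt1

/-- The swap `(x,y) ↦ (y,x)` on `M̃`. -/
def swapMt {M : Type*} (p : Mt M) : Mt M := ⟨(p.1.2, p.1.1), Ne.symm p.2⟩

lemma lipO_antisym (base : M) (g : ↥(LipO M base)) (p : Mt M) :
    ((g : ellInfty M) : Mt M → ℝ) (swapMt p) = - ((g : ellInfty M) : Mt M → ℝ) p := by
  obtain ⟨f, -, h⟩ := g.2
  rw [h, h]
  show (f p.1.2 - f p.1.1) / dist p.1.2 p.1.1 = _
  rw [dist_comm]
  ring

lemma key_stmt1 [Nonempty (Mt M)] (base : M) (F : ↥(LipO M base) →L[ℝ] ℝ) (c : ℝ)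
    (hc : ‖F‖ ≤ c) :
    ∃ Λ' : ellInfty M →L[ℝ] ℝ, IsPositive Λ' ∧
      Λ'.comp (LipO M base).subtypeL = F ∧ ‖Λ'‖ = c := by
  have hc0 : 0 ≤ c := (norm_nonneg F).trans hc
  set S : ellInfty M → ℝ := fun h => ⨆ p, (h : Mt M → ℝ) p with hS
  have happ : ∀ (h : ellInfty M) (p : Mt M), (h : Mt M → ℝ) p ≤ ‖h‖ := fun h p =>
    (le_abs_self _).trans (lp.norm_apply_le_norm ENNReal.top_ne_zero h p)
  have hbdd : ∀ h : ellInfty M, BddAbove (Set.range fun p => (h : Mt M → ℝ) p) := by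
    intro h
    exact ⟨‖h‖, by rintro r ⟨p, rfl⟩; exact happ h p⟩
  have hS_le : ∀ h : ellInfty M, S h ≤ ‖h‖ := fun h => ciSup_le (happ h)
  have hle_S : ∀ (h : ellInfty M) (p : Mt M), (h : Mt M → ℝ) p ≤ S h := fun h p =>
    le_ciSup (hbdd h) p
  have N_hom : ∀ a : ℝ, 0 < a → ∀ h : ellInfty M, c * S (a • h) = a * (c * S h) := by
    intro a ha h
    have hcoe : (⇑(a • h) : Mt M → ℝ) = a • ⇑h := lp.coeFn_smul a h
    have : S (a • h) = a * S h := by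
      rw [hS]
      simp only [hcoe, Pi.smul_apply, smul_eq_mul]
      exact (Real.mul_iSup_of_nonneg ha.le _).symm
    rw [this]; ring
  have N_add : ∀ h k : ellInfty M, c * S (h + k) ≤ c * S h + c * S k := by
    intro h k
    have hcoe : (⇑(h + k) : Mt M → ℝ) = ⇑h + ⇑k := lp.coeFn_add h k
    have : S (h + k) ≤ S h + S k := by
      refine ciSup_le fun p => ?_
      rw [hcoe]
      exact add_le_add (hle_S h p) (hle_S k p)
    calc c * S (h + k) ≤ c * (S h + S k) := mul_le_mul_of_nonneg_left this hc0
      _ = c * S h + c * S k := by ring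
  have hdom : ∀ x : ↥(LipO M base), F x ≤ c * S ↑x := by
    intro x
    have hnorm : ‖(x : ellInfty M)‖ ≤ S ↑x := by
      rw [lp.norm_eq_ciSup]
      refine ciSup_le fun p => ?_
      rw [Real.norm_eq_abs, abs_le]
      constructor
      · have := hle_S (↑x) (swapMt p)
        rw [lipO_antisym base x p] at this
        linarith
      · exact hle_S (↑x) p
    calc F x ≤ ‖F x‖ := le_abs_self _
      _ ≤ ‖F‖ * ‖x‖ := F.le_opNorm x
      _ ≤ c * S ↑x := mul_le_mul hc hnorm (norm_nonneg _) hc0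
  obtain ⟨g, hg_eq, hg_le⟩ :=
    exists_extension_of_le_sublinear ⟨LipO M base, (F : ↥(LipO M base) →ₗ[ℝ] ℝ)⟩
      (fun h => c * S h) N_hom N_add hdom
  have hbound : ∀ h : ellInfty M, ‖g h‖ ≤ c * ‖h‖ := by
    intro h
    rw [Real.norm_eq_abs, abs_le]
    constructor
    · have h1 := hg_le (-h)
      rw [map_neg] at h1
      have h2 : S (-h) ≤ ‖h‖ := (hS_le (-h)).trans_eq (norm_neg h)
      have h3 : c * S (-h) ≤ c * ‖h‖ := mul_le_mul_of_nonneg_left h2 hc0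
      linarith
    · have h1 := hg_le h
      have h3 : c * S h ≤ c * ‖h‖ := mul_le_mul_of_nonneg_left (hS_le h) hc0
      linarith
  set Λ' : ellInfty M →L[ℝ] ℝ := g.mkContinuous c hbound with hΛ'
  have hΛapp : ∀ h, Λ' h = g h := fun h => rfl
  refine ⟨Λ', ?_, ?_, ?_⟩
  · intro h hpos
    have := hg_le (-h)
    rw [map_neg] at this
    have hSneg : S (-h) ≤ 0 := by
      refine ciSup_le fun p => ?_
      have hcoe : (⇑(-h) : Mt M → ℝ) = -⇑h := lp.coeFn_neg h
      rw [hcoe]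
      simpa using hpos p
    have h4 : -g h ≤ c * S (-h) := this
    have h5 : c * S (-h) ≤ 0 := mul_nonpos_iff.2 (Or.inl ⟨hc0, hSneg⟩)
    rw [hΛapp]
    linarith
  · ext x
    exact hg_eq x
  · refine le_antisymm (g.mkContinuous_norm_le hc0 hbound) ?_
    set e : ellInfty M := indicLp (Set.univ : Set (Mt M)) with he
    have hecoe : ∀ p, (e : Mt M → ℝ) p = 1 := by
      intro p; simp [he, indicLp]
    have hnorme : ‖e‖ ≤ 1 := by
      refine lp.norm_le_of_forall_le zero_le_one fun p => ?_
      rw [hecoe p]; simp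
    have hSe : S (-e) = -1 := by
      have hcoe : (⇑(-e) : Mt M → ℝ) = -⇑e := lp.coeFn_neg e
      rw [hS]
      simp only [hcoe, Pi.neg_apply, hecoe]
      exact ciSup_const
    have hge : c ≤ g e := by
      have := hg_le (-e)
      rw [map_neg, hSe] at this
      linarith
    calc c ≤ g e := hge
      _ ≤ ‖Λ' e‖ := by rw [hΛapp]; exact le_abs_self _
      _ ≤ ‖Λ'‖ * ‖e‖ := Λ'.le_opNorm e
      _ ≤ ‖Λ'‖ * 1 := mul_le_mul_of_nonneg_left hnorme (norm_nonneg _)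
      _ = ‖Λ'‖ := mul_one _

set_option linter.unusedSectionVars false in
lemma ellInfty_subsingleton [IsEmpty (Mt M)] : Subsingleton (ellInfty M) :=
  ⟨fun a b => Subtype.ext (funext fun p => isEmptyElim p)⟩

end AuxForStmt1

set_option linter.unusedSectionVars false in
lemma stmt1_part1 (base : M) (Λ : ellInfty M →L[ℝ] ℝ) :
    ∃ Λ' : ellInfty M →L[ℝ] ℝ, IsPositive Λ' ∧
        Λ'.comp (LipO M base).subtypeL = Λ.comp (LipO M base).subtypeL ∧
        ‖Λ'‖ = ‖Λ‖ := by
  rcases isEmpty_or_nonempty (Mt M) with hE | hN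
  · haveI := ellInfty_subsingleton (M := M)
    refine ⟨Λ, ?_, rfl, rfl⟩
    intro h _
    rw [Subsingleton.elim h 0, map_zero]
  · have hc : ‖Λ.comp (LipO M base).subtypeL‖ ≤ ‖Λ‖ := by
      calc ‖Λ.comp (LipO M base).subtypeL‖
          ≤ ‖Λ‖ * ‖(LipO M base).subtypeL‖ := ContinuousLinearMap.opNorm_comp_le _ _
        _ ≤ ‖Λ‖ * 1 :=
            mul_le_mul_of_nonneg_left (Submodule.norm_subtypeL_le _) (norm_nonneg _)
        _ = ‖Λ‖ := mul_one _
    exact key_stmt1 base (Λ.comp (LipO M base).subtypeL) ‖Λ‖ hc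

set_option linter.unusedSectionVars false in
lemma stmt1_part2_empty [IsEmpty (Mt M)] (base : M) (F : ↥(LipO M base) →L[ℝ] ℝ) :
    ∃ Λ' : ellInfty M →L[ℝ] ℝ, IsPositive Λ' ∧
        Λ'.comp (LipO M base).subtypeL = F ∧ ‖Λ'‖ = ‖F‖ := by
  haveI := ellInfty_subsingleton (M := M)
  have hF0 : ‖F‖ = 0 := by
    refine le_antisymm (F.opNorm_le_bound le_rfl fun x => ?_) (norm_nonneg F)
    rw [Subsingleton.elim x 0, map_zero, norm_zero, norm_zero, mul_zero]
  refine ⟨0, ?_, ?_, ?_⟩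
  · intro h _
    exact le_of_eq (ContinuousLinearMap.zero_apply h).symm
  · refine ContinuousLinearMap.ext fun x => ?_
    rw [Subsingleton.elim x 0, map_zero, map_zero]
  · rw [hF0, norm_zero]

set_option linter.unusedSectionVars false in
lemma stmt1_part2 (base : M) (F : ↥(LipO M base) →L[ℝ] ℝ) :
    ∃ Λ' : ellInfty M →L[ℝ] ℝ, IsPositive Λ' ∧
        Λ'.comp (LipO M base).subtypeL = F ∧ ‖Λ'‖ = ‖F‖ := by
  rcases isEmpty_or_nonempty (Mt M) with hE | hN
  · exact stmt1_part2_empty base F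
  · exact key_stmt1 base F ‖F‖ le_rfl

theorem stmt1 (base : M) (Λ : ellInfty M →L[ℝ] ℝ) :
    (∃ Λ' : ellInfty M →L[ℝ] ℝ, IsPositive Λ' ∧
        Λ'.comp (LipO M base).subtypeL = Λ.comp (LipO M base).subtypeL ∧
        ‖Λ'‖ = ‖Λ‖) ∧
    ∀ F : ↥(LipO M base) →L[ℝ] ℝ, ∃ Λ' : ellInfty M →L[ℝ] ℝ, IsPositive Λ' ∧
        Λ'.comp (LipO M base).subtypeL = F ∧ ‖Λ'‖ = ‖F‖ := by
  exact ⟨stmt1_part1 base Λ, fun F => stmt1_part2 base F⟩
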